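/- Let G be a finite simple graph, let v be a vertex of G of degree exactly 2 whose two neighbors are non-adjacent (i.e., v does not lie in a triangle), let u be a neighbor of v, and let H = G/uv be the simple graph obtained from G by contracting the edge uv (deleting any resulting loops and parallel edges). Then s(H) = s(G). -/

import Mathlib

open SimpleGraph

/-- `G` has a `K₄` minor (branch-set formulation: four nonempty, pairwise disjoint,
connected branch sets with an edge between every two of them). -/
def HasK4Minor {V : Type*} (G : SimpleGraph V) : Prop :=
  ∃ B : Fin 4 → Set V,
    (∀ i, (B i).Nonempty) ∧
    (∀ i, (G.induce (B i)).Connected) ∧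
    (∀ i j, i ≠ j → Disjoint (B i) (B j)) ∧
    (∀ i j, i ≠ j → ∃ u ∈ B i, ∃ v ∈ B j, G.Adj u v)

/-- `X` is a transversal of `G`: the graph `G − X` has no `K₄` minor. -/
def IsTransversal {V : Type*} (G : SimpleGraph V) (X : Finset V) : Prop :=
  ¬ HasK4Minor (G.induce ((↑X : Set V)ᶜ))

/-- `s(G)`: the minimum size of a transversal of `G`. -/
noncomputable def transNum {V : Type*} (G : SimpleGraph V) : ℕ :=
  sInf {n : ℕ | ∃ X : Finset V, X.card = n ∧ IsTransversal G X}

/-- The simple graph obtained from `G` by contracting the edge `uv`: the vertex `v` is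
deleted and its other neighbors become neighbors of `u` (loops and parallel edges
are discarded). -/
def contractEdge {V : Type*} (G : SimpleGraph V) (u v : V) :
    SimpleGraph {x : V // x ≠ v} where
  Adj a b := (a : V) ≠ (b : V) ∧
    (G.Adj a b ∨ ((a : V) = u ∧ G.Adj v b) ∨ ((b : V) = u ∧ G.Adj v a))
  symm := by
    constructor
    rintro a b ⟨hne, h⟩
    refine ⟨hne.symm, ?_⟩
    rcases h with h | ⟨h1, h2⟩ | ⟨h1, h2⟩
    · exact Or.inl h.symm
    · exact Or.inr (Or.inr ⟨h1, h2⟩)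
    · exact Or.inr (Or.inl ⟨h1, h2⟩)
  loopless := by constructor; rintro a ⟨hne, -⟩; exact hne rfl

section aux
variable {A : Type*} {B : Type*} {K : SimpleGraph A} {L : SimpleGraph B}

lemma reach_map (ψ : A → B) (h : ∀ a b, K.Adj a b → L.Reachable (ψ a) (ψ b))
    {a b : A} (r : K.Reachable a b) : L.Reachable (ψ a) (ψ b) := by
  obtain ⟨p⟩ := r
  induction p with
  | nil => exact Reachable.refl _
  | cons h' _ ih => exact (h _ _ h').trans ih

lemma connected_transfer (ψ : A → B) (hs : Function.Surjective ψ)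
    (h : ∀ a b, K.Adj a b → L.Reachable (ψ a) (ψ b)) (hK : K.Connected) :
    L.Connected := by
  haveI hne : Nonempty B := Nonempty.map ψ hK.nonempty
  refine ⟨fun s t => ?_⟩
  obtain ⟨a, rfl⟩ := hs s
  obtain ⟨b, rfl⟩ := hs t
  exact reach_map ψ h (hK.preconnected a b)

lemma hasK4Minor_mono (φ : A → B) (hinj : Function.Injective φ)
    (hadj : ∀ a b, K.Adj a b → L.Adj (φ a) (φ b)) (h : HasK4Minor K) :
    HasK4Minor L := by
  obtain ⟨Bs, hne, hconn, hdisj, hcross⟩ := h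
  refine ⟨fun i => φ '' Bs i, fun i => (hne i).image φ, fun i => ?_, fun i j hij => ?_,
    fun i j hij => ?_⟩
  · refine connected_transfer (K := K.induce (Bs i)) (L := L.induce (φ '' Bs i))
      (fun a => ⟨φ ↑a, ⟨↑a, a.2, rfl⟩⟩) ?_ ?_ (hconn i)
    · rintro ⟨b, a, ha, rfl⟩; exact ⟨⟨a, ha⟩, rfl⟩
    · intro a b hab
      exact Adj.reachable (hadj _ _ hab)
  · rw [Set.disjoint_left]
    rintro _ ⟨a, ha, rfl⟩ ⟨b, hb, hba⟩
    cases hinj hba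
    exact Set.disjoint_left.1 (hdisj i j hij) ha hb
  · obtain ⟨a, ha, b, hb, hab⟩ := hcross i j hij
    exact ⟨φ a, ⟨a, ha, rfl⟩, φ b, ⟨b, hb, rfl⟩, hadj a b hab⟩

end aux
section main
variable {V : Type*} {G : SimpleGraph V} {u v x : V}

lemma exists_adj_of_reachable_ne {A : Type*} {K : SimpleGraph A} {a b : A}
    (h : K.Reachable a b) (hab : a ≠ b) : ∃ c, K.Adj a c := by
  obtain ⟨p⟩ := h
  cases p with
  | nil => exact absurd rfl hab
  | cons h' _ => exact ⟨_, h'⟩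

lemma c2 (hvu : G.Adj v u) (hvx : G.Adj v x) (hux : u ≠ x)
    (hdeg : ∀ w, G.Adj v w → w = u ∨ w = x)
    {S : Set V} (hvS : v ∈ S) (h : HasK4Minor (G.induce S)) :
    HasK4Minor ((contractEdge G u v).induce (Subtype.val ⁻¹' S)) := by
  classical
  obtain ⟨Bs, hne, hconn, hdisj, hcross⟩ := h
  set T : Set {y : V // y ≠ v} := Subtype.val ⁻¹' S with hT
  set vS : ↥S := ⟨v, hvS⟩ with hvSdef
  set θ : ↥T → ↥S := fun a => ⟨a.1.1, a.2⟩ with hθ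
  let θi : ∀ (b : ↥S), (b : V) ≠ v → ↥T := fun b hb => ⟨⟨b.1, hb⟩, b.2⟩
  set C : Fin 4 → Set ↥T := fun i => θ ⁻¹' (Bs i) with hC
  have clash : ∀ (m m' : Fin 4), m ≠ m' → ∀ p q : ↥S, p ∈ Bs m → q ∈ Bs m' →
      (p : V) = (q : V) → False := fun m m' hmm p q hp hq hpq =>
    Set.disjoint_left.1 (hdisj m m' hmm) hp (Subtype.ext hpq ▸ hq)
  have keyA : ∀ i, vS ∈ Bs i → ∃ n : ↥S, n ∈ Bs i ∧ (n : V) ≠ v ∧ G.Adj v (n : V) := by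
    intro i hvi
    have hbig : ∃ w ∈ Bs i, w ≠ vS := by
      by_contra hcon
      push_neg at hcon
      obtain ⟨j, k, l, hjk, hjl, hkl, hji, hki, hli⟩ :
          ∃ j k l : Fin 4, j ≠ k ∧ j ≠ l ∧ k ≠ l ∧ j ≠ i ∧ k ≠ i ∧ l ≠ i := by
        fin_cases i <;> decide
      have get : ∀ m : Fin 4, m ≠ i → ∃ n : ↥S, n ∈ Bs m ∧ ((n : V) = u ∨ (n : V) = x) := by
        intro m hm
        obtain ⟨a, ha, b, hb, hab⟩ := hcross i m (Ne.symm hm)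
        have hG : G.Adj (a : V) (b : V) := hab
        have hav : a = vS := hcon a ha
        have : G.Adj v (b : V) := by rw [hav] at hG; exact hG
        exact ⟨b, hb, hdeg _ this⟩
      obtain ⟨nj, hnj, hnju⟩ := get j hji
      obtain ⟨nk, hnk, hnku⟩ := get k hki
      obtain ⟨nl, hnl, hnlu⟩ := get l hli
      rcases hnju with h1 | h1 <;> rcases hnku with h2 | h2 <;> rcases hnlu with h3 | h3
      all_goals first
        | exact clash j k hjk nj nk hnj hnk (h1.trans h2.symm)
        | exact clash j l hjl nj nl hnj hnl (h1.trans h3.symm)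
        | exact clash k l hkl nk nl hnk hnl (h2.trans h3.symm)
    obtain ⟨w, hw, hwne⟩ := hbig
    have hr := (hconn i).preconnected ⟨vS, hvi⟩ ⟨w, hw⟩
    obtain ⟨c, hc⟩ := exists_adj_of_reachable_ne hr
      (fun hh => hwne (by injection hh with hh'; exact hh'.symm))
    have hG : G.Adj v ((c : ↥S) : V) := hc
    exact ⟨(c : ↥S), c.2, hG.ne', hG⟩
  refine ⟨C, ?_, ?_, ?_, ?_⟩
  · intro i
    obtain ⟨b, hb⟩ := hne i
    by_cases hbv : (b : V) = v
    · have hvi : vS ∈ Bs i := by rwa [show b = vS from Subtype.ext hbv] at hb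
      obtain ⟨n, hn, hnv, _⟩ := keyA i hvi
      exact ⟨θi n hnv, hn⟩
    · exact ⟨θi b hbv, hb⟩
  · intro i
    by_cases hvi : vS ∈ Bs i
    · obtain ⟨n, hnB, hnv, hnadjv⟩ := keyA i hvi
      have hnC : θi n hnv ∈ C i := hnB
      refine connected_transfer (K := (G.induce S).induce (Bs i))
        (L := ((contractEdge G u v).induce T).induce (C i))
        (fun b => if hb : ((b : ↥S) : V) = v then ⟨θi n hnv, hnC⟩
                  else ⟨θi ↑b hb, b.2⟩) ?_ ?_ (hconn i)
      · rintro ⟨a, ha⟩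
        refine ⟨⟨θ a, ha⟩, ?_⟩
        simp only [dif_neg (show ((θ a : ↥S) : V) ≠ v from a.1.2)]
        rfl
      · intro a b hab
        have hG : G.Adj ((a : ↥S) : V) ((b : ↥S) : V) := hab
        by_cases hav : ((a : ↥S) : V) = v
        · by_cases hbv : ((b : ↥S) : V) = v
          · exact absurd (hav.trans hbv.symm) hG.ne
          · simp only [dif_pos hav, dif_neg hbv]
            have hGb : G.Adj v ((b : ↥S) : V) := hav ▸ hG
            by_cases heq : (n : V) = ((b : ↥S) : V)
            · rw [show (⟨θi n hnv, hnC⟩ : ↥(C i)) = ⟨θi ↑b hbv, b.2⟩ from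
                Subtype.ext (Subtype.ext (Subtype.ext heq))]
            · refine Adj.reachable ?_
              rcases hdeg _ hnadjv with h1 | h1 <;> rcases hdeg _ hGb with h2 | h2
              · exact absurd (h1.trans h2.symm) heq
              · exact ⟨heq, Or.inr (Or.inl ⟨h1, hGb⟩)⟩
              · exact ⟨heq, Or.inr (Or.inr ⟨h2, hnadjv⟩)⟩
              · exact absurd (h1.trans h2.symm) heq
        · by_cases hbv : ((b : ↥S) : V) = v
          · simp only [dif_neg hav, dif_pos hbv]
            have hGa : G.Adj v ((a : ↥S) : V) := hbv ▸ hG.symm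
            by_cases heq : (n : V) = ((a : ↥S) : V)
            · rw [show (⟨θi n hnv, hnC⟩ : ↥(C i)) = ⟨θi ↑a hav, a.2⟩ from
                Subtype.ext (Subtype.ext (Subtype.ext heq))]
            · refine (Adj.reachable ?_).symm
              rcases hdeg _ hnadjv with h1 | h1 <;> rcases hdeg _ hGa with h2 | h2
              · exact absurd (h1.trans h2.symm) heq
              · exact ⟨heq, Or.inr (Or.inl ⟨h1, hGa⟩)⟩
              · exact ⟨heq, Or.inr (Or.inr ⟨h2, hnadjv⟩)⟩
              · exact absurd (h1.trans h2.symm) heq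
          · simp only [dif_neg hav, dif_neg hbv]
            exact Adj.reachable ⟨hG.ne, Or.inl hG⟩
    · refine connected_transfer (K := (G.induce S).induce (Bs i))
        (L := ((contractEdge G u v).induce T).induce (C i))
        (fun b => ⟨θi ↑b (fun hh => hvi ((Subtype.ext hh : (b : ↥S) = vS) ▸ b.2)), b.2⟩)
        ?_ ?_ (hconn i)
      · rintro ⟨a, ha⟩
        exact ⟨⟨θ a, ha⟩, rfl⟩
      · intro a b hab
        have hG : G.Adj ((a : ↥S) : V) ((b : ↥S) : V) := hab
        exact Adj.reachable ⟨hG.ne, Or.inl hG⟩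
  · intro i j hij
    exact Disjoint.preimage θ (hdisj i j hij)
  · intro i j hij
    obtain ⟨a, ha, b, hb, hab⟩ := hcross i j hij
    have hG : G.Adj (a : V) (b : V) := hab
    by_cases hav : (a : V) = v
    · have hvi : vS ∈ Bs i := (Subtype.ext hav : a = vS) ▸ ha
      obtain ⟨n, hnB, hnv, hnadjv⟩ := keyA i hvi
      have hbv : (b : V) ≠ v := fun hh => hG.ne (hav.trans hh.symm)
      have hGb : G.Adj v (b : V) := hav ▸ hG
      have hnb : (n : V) ≠ (b : V) := fun hh => clash i j hij n b hnB hb hh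
      refine ⟨θi n hnv, hnB, θi b hbv, hb, ?_⟩
      rcases hdeg _ hnadjv with h1 | h1 <;> rcases hdeg _ hGb with h2 | h2
      · exact absurd (h1.trans h2.symm) hnb
      · exact ⟨hnb, Or.inr (Or.inl ⟨h1, hGb⟩)⟩
      · exact ⟨hnb, Or.inr (Or.inr ⟨h2, hnadjv⟩)⟩
      · exact absurd (h1.trans h2.symm) hnb
    · by_cases hbv : (b : V) = v
      · have hvj : vS ∈ Bs j := (Subtype.ext hbv : b = vS) ▸ hb
        obtain ⟨n, hnB, hnv, hnadjv⟩ := keyA j hvj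
        have hGa : G.Adj v (a : V) := hbv ▸ hG.symm
        have hna : (n : V) ≠ (a : V) := fun hh => clash j i (Ne.symm hij) n a hnB ha hh
        refine ⟨θi a hav, ha, θi n hnv, hnB, ?_⟩
        rcases hdeg _ hnadjv with h1 | h1 <;> rcases hdeg _ hGa with h2 | h2
        · exact absurd (h1.trans h2.symm) hna
        · exact ⟨fun hh => hna hh.symm, Or.inr (Or.inr ⟨h1, hGa⟩)⟩
        · exact ⟨fun hh => hna hh.symm, Or.inr (Or.inl ⟨h2, hnadjv⟩)⟩
        · exact absurd (h1.trans h2.symm) hna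
      · exact ⟨θi a hav, ha, θi b hbv, hb, hG.ne, Or.inl hG⟩

end main
section main2
variable {V : Type*} {G : SimpleGraph V} {u v : V}

lemma c1 (hvu : G.Adj v u) {S : Set V} (hvS : v ∈ S)
    (h : HasK4Minor ((contractEdge G u v).induce (Subtype.val ⁻¹' S))) :
    HasK4Minor (G.induce S) := by
  classical
  obtain ⟨C, hne, hconn, hdisj, hcross⟩ := h
  set vS : ↥S := ⟨v, hvS⟩ with hvSdef
  set θ : ↥(Subtype.val ⁻¹' S : Set {y : V // y ≠ v}) → ↥S := fun a => ⟨a.1.1, a.2⟩ with hθ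
  set Bs : Fin 4 → Set ↥S := fun i =>
    {b | (∃ a ∈ C i, θ a = b) ∨
      ((b : V) = v ∧ ∃ a ∈ C i, (a : {y : V // y ≠ v}) = ⟨u, hvu.ne'⟩)} with hBs
  have memθ : ∀ (i : Fin 4) a, a ∈ C i → θ a ∈ Bs i := fun i a ha =>
    Or.inl ⟨a, ha, rfl⟩
  have θinj : Function.Injective θ := fun a b hab =>
    Subtype.ext (Subtype.ext (congrArg (fun z : ↥S => (z : V)) hab))
  refine ⟨Bs, ?_, ?_, ?_, ?_⟩
  · intro i
    obtain ⟨a, ha⟩ := hne i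
    exact ⟨θ a, memθ i a ha⟩
  · intro i
    have hedge : ∀ a b : ↥(C i),
        (((contractEdge G u v).induce (Subtype.val ⁻¹' S)).induce (C i)).Adj a b →
        ((G.induce S).induce (Bs i)).Reachable ⟨θ ↑a, memθ i ↑a a.2⟩ ⟨θ ↑b, memθ i ↑b b.2⟩ := by
      intro a b hab
      obtain ⟨hne', hcase⟩ := hab
      rcases hcase with hG | ⟨hau, hGb⟩ | ⟨hbu, hGa⟩
      · exact Adj.reachable (hG : G.Adj _ _)
      · have hvB : vS ∈ Bs i := Or.inr ⟨rfl, ↑a, a.2, Subtype.ext hau⟩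
        have h1 : ((G.induce S).induce (Bs i)).Adj ⟨θ ↑a, memθ i ↑a a.2⟩ ⟨vS, hvB⟩ := by
          have h0 : G.Adj u v := hvu.symm
          rw [← hau] at h0
          exact h0
        have h2 : ((G.induce S).induce (Bs i)).Adj ⟨vS, hvB⟩ ⟨θ ↑b, memθ i ↑b b.2⟩ := hGb
        exact (Adj.reachable h1).trans (Adj.reachable h2)
      · have hvB : vS ∈ Bs i := Or.inr ⟨rfl, ↑b, b.2, Subtype.ext hbu⟩
        have h1 : ((G.induce S).induce (Bs i)).Adj ⟨θ ↑a, memθ i ↑a a.2⟩ ⟨vS, hvB⟩ := hGa.symm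
        have h2 : ((G.induce S).induce (Bs i)).Adj ⟨vS, hvB⟩ ⟨θ ↑b, memθ i ↑b b.2⟩ := by
          have h0 : G.Adj v u := hvu
          rw [← hbu] at h0
          exact h0
        exact (Adj.reachable h1).trans (Adj.reachable h2)
    have hbase : ∀ s : ↥(Bs i), ∃ a : ↥(C i),
        ((G.induce S).induce (Bs i)).Reachable s ⟨θ ↑a, memθ i ↑a a.2⟩ := by
      rintro ⟨s, hs⟩
      rcases hs with ⟨a, ha, rfl⟩ | ⟨hsv, a, ha, hau⟩
      · exact ⟨⟨a, ha⟩, Reachable.refl _⟩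
      · refine ⟨⟨a, ha⟩, Adj.reachable ?_⟩
        have h0 : G.Adj v u := hvu
        rw [← hsv, ← (show ((θ a : ↥S) : V) = u from congrArg Subtype.val hau)] at h0
        exact h0
    haveI : Nonempty ↥(Bs i) := by
      obtain ⟨a, ha⟩ := hne i
      exact ⟨⟨θ a, memθ i a ha⟩⟩
    refine ⟨fun s t => ?_⟩
    obtain ⟨a, hra⟩ := hbase s
    obtain ⟨b, hrb⟩ := hbase t
    exact hra.trans ((reach_map _ hedge ((hconn i).preconnected a b)).trans hrb.symm)
  · intro i j hij
    rw [Set.disjoint_left]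
    rintro s hsi hsj
    rcases hsi with ⟨a, ha, rfl⟩ | ⟨hsv, a, ha, hau⟩
    · rcases hsj with ⟨b, hb, hba⟩ | ⟨hsv, -⟩
      · cases θinj hba
        exact Set.disjoint_left.1 (hdisj i j hij) ha hb
      · exact absurd hsv a.1.2
    · rcases hsj with ⟨b, hb, hbs⟩ | ⟨-, b, hb, hbu⟩
      · exact absurd (by rw [hbs]; exact hsv : ((θ b : ↥S) : V) = v) b.1.2
      · cases (show a = b from Subtype.ext (Subtype.ext
          ((Subtype.ext_iff.1 hau).trans (Subtype.ext_iff.1 hbu).symm)))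
        exact Set.disjoint_left.1 (hdisj i j hij) ha hb
  · intro i j hij
    obtain ⟨a, ha, b, hb, hab⟩ := hcross i j hij
    obtain ⟨hne', hcase⟩ := hab
    rcases hcase with hG | ⟨hau, hGb⟩ | ⟨hbu, hGa⟩
    · exact ⟨θ a, memθ i a ha, θ b, memθ j b hb, hG⟩
    · exact ⟨vS, Or.inr ⟨rfl, a, ha, Subtype.ext hau⟩, θ b, memθ j b hb, hGb⟩
    · exact ⟨θ a, memθ i a ha, vS, Or.inr ⟨rfl, b, hb, Subtype.ext hbu⟩, hGa.symm⟩

end main2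
lemma univ_transversal {A : Type*} [Fintype A] (K : SimpleGraph A) :
    IsTransversal K Finset.univ := by
  rintro ⟨B, hne, -, -, -⟩
  obtain ⟨a, -⟩ := hne 0
  exact a.2 (Finset.mem_coe.2 (Finset.mem_univ _))

/-- Contracting an edge `uv` incident to a degree-2 vertex `v` whose two neighbors are
non-adjacent does not change `s(G)`. -/
theorem statement7 {V : Type*} [Fintype V] (G : SimpleGraph V) (u v x : V)
    (huv : G.Adj v u) (hux : u ≠ x) (hN : G.neighborSet v = {u, x})
    (hnadj : ¬ G.Adj u x) :
    transNum (contractEdge G u v) = transNum G := by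
  classical
  haveI : Fintype {y : V // y ≠ v} := Fintype.ofFinite _
  have hvx : G.Adj v x := by
    have : x ∈ G.neighborSet v := by rw [hN]; exact Or.inr rfl
    exact this
  have hdeg : ∀ w, G.Adj v w → w = u ∨ w = x := by
    intro w hw
    have : w ∈ G.neighborSet v := hw
    rw [hN] at this
    exact this
  have hGne : {n : ℕ | ∃ X : Finset V, X.card = n ∧ IsTransversal G X}.Nonempty :=
    ⟨(Finset.univ : Finset V).card, Finset.univ, rfl, univ_transversal G⟩
  have hHne : {n : ℕ | ∃ X : Finset {y : V // y ≠ v}, X.card = n ∧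
      IsTransversal (contractEdge G u v) X}.Nonempty :=
    ⟨(Finset.univ : Finset {y : V // y ≠ v}).card, Finset.univ, rfl,
      univ_transversal (contractEdge G u v)⟩
  apply le_antisymm
  · -- transNum (contractEdge G u v) ≤ transNum G
    obtain ⟨X, hXcard, hXtr⟩ := Nat.sInf_mem hGne
    by_cases hvX : v ∈ X
    · set uW : {y : V // y ≠ v} := ⟨u, huv.ne'⟩ with huW
      set X' : Finset {y : V // y ≠ v} := insert uW ((X.erase v).subtype (fun y => y ≠ v))
        with hX'
      have hcard : X'.card ≤ X.card := by
        calc X'.card ≤ ((X.erase v).subtype (fun y => y ≠ v)).card + 1 :=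
              Finset.card_insert_le _ _
          _ ≤ (X.erase v).card + 1 := by
              rw [Finset.card_subtype]
              exact Nat.add_le_add_right (Finset.card_filter_le _ _) 1
          _ = X.card - 1 + 1 := by rw [Finset.card_erase_of_mem hvX]
          _ = X.card := Nat.succ_pred_eq_of_pos (Finset.card_pos.2 ⟨v, hvX⟩)
      have htr : IsTransversal (contractEdge G u v) X' := by
        intro hK4
        apply hXtr
        refine hasK4Minor_mono
          (K := (contractEdge G u v).induce ((↑X' : Set {y : V // y ≠ v})ᶜ))
          (L := G.induce ((↑X : Set V)ᶜ))
          (fun a => ⟨a.1.1, ?_⟩) ?_ ?_ hK4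
        · intro hmem
          have h1 : a.1.1 ∈ X.erase v := Finset.mem_erase.2 ⟨a.1.2, hmem⟩
          have h2 : a.1 ∈ X' := Finset.mem_insert.2 (Or.inr (Finset.mem_subtype.2 h1))
          exact a.2 (Finset.mem_coe.2 h2)
        · intro a b hab
          exact Subtype.ext (Subtype.ext (congrArg (fun z : ↥((↑X : Set V)ᶜ) => (z : V)) hab))
        · intro a b hab
          obtain ⟨hne', hcase⟩ := hab
          rcases hcase with hG | ⟨hau, -⟩ | ⟨hbu, -⟩
          · exact hG
          · have h3 : (a.1 : {y : V // y ≠ v}) = uW := Subtype.ext hau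
            exact absurd (Finset.mem_coe.2 (Finset.mem_insert.2 (Or.inl h3))) a.2
          · have h3 : (b.1 : {y : V // y ≠ v}) = uW := Subtype.ext hbu
            exact absurd (Finset.mem_coe.2 (Finset.mem_insert.2 (Or.inl h3))) b.2
      exact le_trans (Nat.sInf_le ⟨X', rfl, htr⟩) (le_of_le_of_eq hcard hXcard)
    · set X' : Finset {y : V // y ≠ v} := X.subtype (fun y => y ≠ v) with hX'
      have hcard : X'.card = X.card := by
        rw [hX', Finset.card_subtype, Finset.filter_true_of_mem]
        intro y hy hyv
        exact hvX (hyv ▸ hy)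
      have htr : IsTransversal (contractEdge G u v) X' := by
        intro hK4
        apply hXtr
        have hsets : (↑X' : Set {y : V // y ≠ v})ᶜ = Subtype.val ⁻¹' (↑X : Set V)ᶜ := by
          ext a
          simp [hX', Finset.mem_subtype]
        rw [hsets] at hK4
        exact c1 huv (by exact hvX) hK4
      exact le_trans (Nat.sInf_le ⟨X', rfl, htr⟩) (le_of_eq (hcard.trans hXcard))
  · -- transNum G ≤ transNum (contractEdge G u v)
    obtain ⟨Y, hYcard, hYtr⟩ := Nat.sInf_mem hHne
    set X : Finset V := Y.image Subtype.val with hX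
    have hcard : X.card = Y.card := Finset.card_image_of_injective _ Subtype.val_injective
    have hvS : v ∈ (↑X : Set V)ᶜ := by
      intro hmem
      obtain ⟨a, -, ha⟩ := Finset.mem_image.1 (Finset.mem_coe.1 hmem)
      exact a.2 ha
    have htr : IsTransversal G X := by
      intro hK4
      apply hYtr
      have h2 := c2 huv hvx hux hdeg hvS hK4
      have hsets : (Subtype.val ⁻¹' (↑X : Set V)ᶜ : Set {y : V // y ≠ v}) =
          (↑Y : Set {y : V // y ≠ v})ᶜ := by
        ext a
        simp only [Set.mem_preimage, Set.mem_compl_iff, Finset.mem_coe, hX, Finset.mem_image]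
        constructor
        · intro h ha
          exact h ⟨a, ha, rfl⟩
        · rintro h ⟨b, hb, hba⟩
          cases Subtype.val_injective hba
          exact h hb
      rw [hsets] at h2
      exact h2
    exact le_trans (Nat.sInf_le ⟨X, rfl, htr⟩) (le_of_eq (hcard.trans hYcard))
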